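/- For integers κ ≥ 2 and a real parameter k_f with k_f ∉ ℕ, setting b = 2 - k_f and a = κ, the polynomial P_{a,b}(X,Y) = ∑_{j=0}^{a-2} C(j+b-2, j) X^j (X+Y)^{a-2-j} satisfies P_{a,b}(X,Y) = ∑_{j=0}^{a-2} C(a+b-3, a-2-j) C(j+b-2, j) (X+Y)^{a-2-j} (-Y)^j, provided b ≠ 1 and b ≠ 2. -/

import Mathlib

/-- The generalized binomial coefficient `C(x,k) = Γ(x+1)/(k! Γ(x-k+1))`. -/
noncomputable def genChoose (x : ℝ) (k : ℕ) : ℝ :=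
  Real.Gamma (x + 1) / ((k.factorial : ℝ) * Real.Gamma (x - k + 1))

/-- The polynomial `P_{a,b}(X,Y) = ∑_{j=0}^{a-2} C(j+b-2, j) X^j (X+Y)^{a-2-j}`. -/
noncomputable def Ppoly (a : ℕ) (b : ℝ) (X Y : ℝ) : ℝ :=
  ∑ j ∈ Finset.range (a - 1), genChoose ((j : ℝ) + b - 2) j * X ^ j * (X + Y) ^ (a - 2 - j)

/-- For an integer `κ ≥ 2` and real `k_f ∉ ℕ`, with `b = 2 - k_f` and `a = κ` (so `b ≠ 1, 2`),
`P_{a,b}(X,Y) = ∑_{j=0}^{a-2} C(a+b-3, a-2-j) C(j+b-2, j) (X+Y)^{a-2-j} (-Y)^j`. -/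
lemma gamma_ne' (kf : ℝ) (hkf : ∀ n : ℕ, kf ≠ n) (x : ℝ) (k : ℕ) (hx : x = (k:ℝ) + 1 - kf) :
    Real.Gamma x ≠ 0 := by
  apply Real.Gamma_ne_zero
  intro m hm
  exact hkf (k + 1 + m) (by push_cast; linarith [hx ▸ hm])

lemma sub_ne' (kf : ℝ) (hkf : ∀ n : ℕ, kf ≠ n) (x : ℝ) (k : ℕ) (hx : x = (k:ℝ) + 1 - kf) :
    x ≠ 0 := fun h => hkf (k+1) (by push_cast; linarith [hx ▸ h])

lemma genChoose_zero (x : ℝ) (h : Real.Gamma (x+1) ≠ 0) : genChoose x 0 = 1 := by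
  unfold genChoose
  simp [div_self h]

lemma genChoose_pascal (x : ℝ) (k : ℕ) (h0 : x - k ≠ 0) (h1 : Real.Gamma (x - k) ≠ 0)
    (h2 : x + 1 ≠ 0) :
    genChoose (x+1) (k+1) = genChoose x k + genChoose x (k+1) := by
  unfold genChoose
  have e1 : x - (k:ℝ) + 1 = (x - k) + 1 := by ring
  have e2 : x + 1 - ((k:ℕ)+1 : ℕ) + 1 = (x - k) + 1 := by push_cast; ring
  have e3 : x - ((k:ℕ)+1 : ℕ) + 1 = x - k := by push_cast; ring
  have e4 : x + 1 + 1 = (x+1) + 1 := by ring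
  rw [e1, e2, e3, e4, Real.Gamma_add_one h0, Real.Gamma_add_one h2]
  have hf : (Nat.factorial (k+1) : ℝ) = ((k:ℝ)+1) * k.factorial := by
    push_cast [Nat.factorial_succ]; ring
  rw [hf]
  have hfk : (k.factorial : ℝ) ≠ 0 := Nat.cast_ne_zero.mpr k.factorial_ne_zero
  have hk1 : ((k:ℝ)+1) ≠ 0 := by positivity
  field_simp
  ring

lemma genChoose_prod (kf : ℝ) (hkf : ∀ n : ℕ, kf ≠ n) (m j : ℕ) (hj : j ≤ m) :
    genChoose ((m:ℝ) - kf) m * (m.choose j : ℝ)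
      = genChoose ((j:ℝ) - kf) j * genChoose ((m:ℝ) - kf) (m - j) := by
  unfold genChoose
  have e1 : (m:ℝ) - kf - (m:ℕ) + 1 = 1 - kf := by push_cast; ring
  have e2 : (j:ℝ) - kf - (j:ℕ) + 1 = 1 - kf := by push_cast; ring
  have e3 : (m:ℝ) - kf - ((m - j : ℕ):ℝ) + 1 = (j:ℝ) - kf + 1 := by
    rw [Nat.cast_sub hj]; ring
  rw [e1, e2, e3]
  have h1 : Real.Gamma (1 - kf) ≠ 0 := gamma_ne' kf hkf _ 0 (by norm_num)
  have h2 : Real.Gamma ((j:ℝ) - kf + 1) ≠ 0 := gamma_ne' kf hkf _ j (by ring)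
  have hfm : (m.factorial : ℝ) ≠ 0 := Nat.cast_ne_zero.mpr m.factorial_ne_zero
  have hfj : (j.factorial : ℝ) ≠ 0 := Nat.cast_ne_zero.mpr j.factorial_ne_zero
  have hfmj : ((m - j).factorial : ℝ) ≠ 0 := Nat.cast_ne_zero.mpr (m - j).factorial_ne_zero
  have hc : (m.choose j : ℝ) * (j.factorial : ℝ) * ((m - j).factorial : ℝ) = (m.factorial : ℝ) := by
    exact_mod_cast congrArg (Nat.cast : ℕ → ℝ) (Nat.choose_mul_factorial_mul_factorial hj)
  field_simp
  linear_combination Real.Gamma ((m:ℝ) - kf + 1) * hc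

lemma pow_eq (X Y : ℝ) (m : ℕ) :
    X ^ m = ∑ j ∈ Finset.range (m+1), (m.choose j : ℝ) * (X+Y)^(m-j) * (-Y)^j := by
  have h : X ^ m = ((X+Y) + (-Y)) ^ m := by ring_nf
  rw [h, add_pow, ← Finset.sum_range_reflect]
  refine Finset.sum_congr rfl fun j hj => ?_
  have hj' : j ≤ m := by simpa [Nat.lt_succ_iff] using hj
  have e1 : m + 1 - 1 - j = m - j := by omega
  have e2 : m - (m - j) = j := by omega
  rw [e1, e2, Nat.choose_symm hj']
  ring

lemma key (kf : ℝ) (hkf : ∀ n : ℕ, kf ≠ n) (X Y : ℝ) (m : ℕ) :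
    ∑ j ∈ Finset.range (m+1), genChoose ((j:ℝ) - kf) j * X ^ j * (X+Y) ^ (m-j)
      = ∑ j ∈ Finset.range (m+1),
          genChoose ((m:ℝ) + 1 - kf) (m-j) * genChoose ((j:ℝ) - kf) j
            * (X+Y)^(m-j) * (-Y)^j := by
  induction m with
  | zero =>
      simp only [Finset.sum_range_one, Nat.cast_zero, Nat.sub_self, pow_zero, mul_one, one_mul,
        Nat.zero_eq, zero_add]
      rw [genChoose_zero (1 - kf) (gamma_ne' kf hkf _ 1 (by push_cast; ring))]
      ring
  | succ m ih =>
      have hL : (∑ j ∈ Finset.range (m+1+1), genChoose ((j:ℝ) - kf) j * X ^ j * (X+Y) ^ (m+1-j))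
          = (X+Y) * (∑ j ∈ Finset.range (m+1), genChoose ((j:ℝ) - kf) j * X ^ j * (X+Y) ^ (m-j))
            + genChoose ((m:ℝ)+1 - kf) (m+1) * X ^ (m+1) := by
        rw [Finset.sum_range_succ, Finset.mul_sum]
        congr 1
        · refine Finset.sum_congr rfl fun j hj => ?_
          have hj' : j ≤ m := by simpa [Nat.lt_succ_iff] using hj
          rw [show m + 1 - j = (m - j) + 1 by omega, pow_succ]
          ring
        · rw [Nat.sub_self, pow_zero, mul_one,
            show ((m+1:ℕ):ℝ) - kf = (m:ℝ)+1 - kf by push_cast; ring]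
      have hXm : genChoose ((m:ℝ)+1 - kf) (m+1) * X ^ (m+1)
          = ∑ j ∈ Finset.range (m+1+1),
              genChoose ((m:ℝ)+1 - kf) (m+1-j) * genChoose ((j:ℝ) - kf) j
                * (X+Y)^(m+1-j) * (-Y)^j := by
        rw [pow_eq X Y (m+1), Finset.mul_sum]
        refine Finset.sum_congr rfl fun j hj => ?_
        have hj' : j ≤ m + 1 := by simpa [Nat.lt_succ_iff] using hj
        have hp := genChoose_prod kf hkf (m+1) j hj'
        push_cast at hp
        linear_combination (X+Y)^(m+1-j) * (-Y)^j * hp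
      rw [show ((m+1:ℕ):ℝ) + 1 - kf = ((m:ℝ) + 1 - kf) + 1 by push_cast; ring,
        hL, ih, hXm,
        Finset.sum_range_succ (f := fun j => genChoose ((m:ℝ)+1 - kf) (m+1-j)
          * genChoose ((j:ℝ) - kf) j * (X+Y)^(m+1-j) * (-Y)^j) (n := m+1),
        Finset.sum_range_succ (f := fun j => genChoose ((m:ℝ)+1 - kf + 1) (m+1-j)
          * genChoose ((j:ℝ) - kf) j * (X+Y)^(m+1-j) * (-Y)^j) (n := m+1),
        Finset.mul_sum, ← add_assoc, ← Finset.sum_add_distrib]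
      congr 1
      · refine Finset.sum_congr rfl fun j hj => ?_
        have hj' : j ≤ m := by simpa [Nat.lt_succ_iff] using hj
        have hc : ((m - j : ℕ):ℝ) = (m:ℝ) - j := Nat.cast_sub hj'
        have h0 : (m:ℝ) + 1 - kf - ((m-j:ℕ):ℝ) ≠ 0 := by
          rw [hc]; exact sub_ne' kf hkf _ j (by push_cast; ring)
        have h1 : Real.Gamma ((m:ℝ) + 1 - kf - ((m-j:ℕ):ℝ)) ≠ 0 := by
          rw [hc]; exact gamma_ne' kf hkf _ j (by push_cast; ring)
        have h2 : (m:ℝ) + 1 - kf + 1 ≠ 0 := sub_ne' kf hkf _ (m+1) (by push_cast; ring)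
        have hpas := genChoose_pascal ((m:ℝ) + 1 - kf) (m - j) h0 h1 h2
        rw [show m - j + 1 = m + 1 - j by omega] at hpas
        rw [hpas, show m + 1 - j = (m - j) + 1 by omega, pow_succ]
        ring
      · rw [Nat.sub_self, pow_zero,
          genChoose_zero ((m:ℝ) + 1 - kf) (gamma_ne' kf hkf _ (m+1) (by push_cast; ring)),
          genChoose_zero ((m:ℝ) + 1 - kf + 1) (gamma_ne' kf hkf _ (m+2) (by push_cast; ring))]


theorem Ppoly_alternative_form (κ : ℕ) (hκ : 2 ≤ κ) (kf : ℝ) (hkf : ∀ n : ℕ, kf ≠ n)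
    (hb1 : (2 - kf) ≠ 1) (hb2 : (2 - kf) ≠ 2) (X Y : ℝ) :
    Ppoly κ (2 - kf) X Y
      = ∑ j ∈ Finset.range (κ - 1),
          genChoose ((κ : ℝ) + (2 - kf) - 3) (κ - 2 - j) * genChoose ((j : ℝ) + (2 - kf) - 2) j *
            (X + Y) ^ (κ - 2 - j) * (-Y) ^ j := by
  obtain ⟨m, rfl⟩ : ∃ m, κ = m + 2 := ⟨κ - 2, by omega⟩
  unfold Ppoly
  rw [show m + 2 - 1 = m + 1 from rfl,
    show ((m+2:ℕ):ℝ) + (2 - kf) - 3 = (m:ℝ) + 1 - kf by push_cast; ring]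
  have hsub : ∀ j : ℕ, m + 2 - 2 - j = m - j := fun j => by omega
  simp only [hsub]
  calc ∑ j ∈ Finset.range (m+1), genChoose ((j:ℝ) + (2 - kf) - 2) j * X ^ j * (X+Y) ^ (m-j)
      = ∑ j ∈ Finset.range (m+1), genChoose ((j:ℝ) - kf) j * X ^ j * (X+Y) ^ (m-j) := by
        refine Finset.sum_congr rfl fun j _ => ?_
        rw [show ((j:ℝ) + (2 - kf) - 2) = (j:ℝ) - kf by ring]
    _ = ∑ j ∈ Finset.range (m+1),
          genChoose ((m:ℝ) + 1 - kf) (m-j) * genChoose ((j:ℝ) - kf) j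
            * (X+Y)^(m-j) * (-Y)^j := key kf hkf X Y m
    _ = ∑ j ∈ Finset.range (m+1),
          genChoose ((m:ℝ) + 1 - kf) (m-j) * genChoose ((j:ℝ) + (2 - kf) - 2) j
            * (X+Y)^(m-j) * (-Y)^j := by
        refine Finset.sum_congr rfl fun j _ => ?_
        rw [show ((j:ℝ) + (2 - kf) - 2) = (j:ℝ) - kf by ring]
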